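/- Let G be the reduced Gröbner basis, under lexicographic order with X₁ ≻ … ≻ X_n, of a zero-dimensional radical-or-not ideal I ⊆ k[X₁,…,X_n] that is the vanishing ideal of a finite set of points with multiplicity structures. Let p₀ ∈ G be the unique univariate polynomial in X_n. For each g ∈ G, viewing g as a polynomial in X₁,…,X_{n-1} with coefficients in k[X_n], the leading coefficient LC_n(g) ∈ k[X_n] divides p₀. -/

import Mathlib

def IsLowerSetN {n : ℕ} (D : Set (Fin n → ℕ)) : Prop :=
  ∀ d ∈ D, ∀ i : Fin n, d i ≠ 0 → Function.update d i (d i - 1) ∈ D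

/-- leading exponent under lexicographic order with `X 0 ≻ X 1 ≻ …`. -/
noncomputable def lexDeg {n : ℕ} {k : Type*} [CommSemiring k]
    (f : MvPolynomial (Fin n) k) : Fin n → ℕ :=
  ⇑(ofLex ((f.support.image (fun m => toLex m)).max.unbotD (toLex 0)))

def IsRedGB {n : ℕ} {k : Type*} [Field k] (I : Ideal (MvPolynomial (Fin n) k))
    (G : Set (MvPolynomial (Fin n) k)) : Prop :=
  G ⊆ (I : Set (MvPolynomial (Fin n) k)) ∧
  (∀ g ∈ G, g ≠ 0) ∧
  (∀ g ∈ G, MvPolynomial.coeff (Finsupp.equivFunOnFinite.symm (lexDeg g)) g = 1) ∧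
  (∀ f ∈ I, f ≠ 0 → ∃ g ∈ G, lexDeg g ≤ lexDeg f) ∧
  (∀ g ∈ G, ∀ m ∈ g.support, ∀ g' ∈ G, g' ≠ g → ¬ (lexDeg g' ≤ ⇑m))

noncomputable def mderiv {n : ℕ} {k : Type*} [CommSemiring k]
    (d : Fin n → ℕ) (f : MvPolynomial (Fin n) k) : MvPolynomial (Fin n) k :=
  (List.finRange n).foldr (fun i g => (fun h => MvPolynomial.pderiv i h)^[d i] g) f

/-- the lex-leading value of the first `n` coordinates over the support of `f`,
i.e. the exponent of the leading monomial of `f` regarded in `k(X_n)[X₁,…,X_{n-1}]`. -/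
noncomputable def initLead {n : ℕ} {k : Type*} [CommSemiring k]
    (f : MvPolynomial (Fin (n + 1)) k) : Fin n → ℕ :=
  ⇑(ofLex ((f.support.image
      (fun (m : Fin (n + 1) →₀ ℕ) => toLex (Finsupp.equivFunOnFinite.symm (Fin.init ⇑m)))).max.unbotD (toLex 0)))

/-- `LC_n(f)`: the leading coefficient (an element of `k[X_n]`) of `f` regarded as
an element of `k(X_n)[X₁,…,X_{n-1}]` under lex order. -/
noncomputable def LCn {n : ℕ} {k : Type*} [CommSemiring k]
    (f : MvPolynomial (Fin (n + 1)) k) : Polynomial k :=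
  ∑ m ∈ f.support.filter (fun (m : Fin (n + 1) →₀ ℕ) => Fin.init ⇑m = initLead f),
    Polynomial.C (MvPolynomial.coeff m f) * Polynomial.X ^ (m (Fin.last n))

namespace LCnAux

open MvPolynomial

variable {n : ℕ} {k : Type*} [Field k]

/-- snoc as a Finsupp on `Fin (n+1)` -/
noncomputable def snF (β : Fin n → ℕ) (j : ℕ) : Fin (n + 1) →₀ ℕ :=
  Finsupp.equivFunOnFinite.symm (Fin.snoc β j)

@[simp] lemma coe_snF (β : Fin n → ℕ) (j : ℕ) : ⇑(snF β j) = Fin.snoc β j := rfl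

@[simp] lemma snF_last (β : Fin n → ℕ) (j : ℕ) : snF β j (Fin.last n) = j := by
  show (Fin.snoc β j : Fin (n+1) → ℕ) (Fin.last n) = j
  simp

lemma snF_init_last (m : Fin (n + 1) →₀ ℕ) : snF (Fin.init ⇑m) (m (Fin.last n)) = m := by
  apply Finsupp.ext
  intro i
  show (Fin.snoc (Fin.init ⇑m) (m (Fin.last n)) : Fin (n+1) → ℕ) i = m i
  rw [Fin.snoc_init_self]

/-- slice of a polynomial at a first-n exponent -/
noncomputable def slice (β : Fin n → ℕ) (f : MvPolynomial (Fin (n + 1)) k) : Polynomial k :=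
  ∑ m ∈ f.support, if Fin.init ⇑m = β then
    Polynomial.C (MvPolynomial.coeff m f) * Polynomial.X ^ (m (Fin.last n)) else 0

lemma LCn_eq_slice (f : MvPolynomial (Fin (n + 1)) k) : LCn f = slice (initLead f) f := by
  rw [LCn, slice, Finset.sum_filter]

lemma slice_coeff (β : Fin n → ℕ) (f : MvPolynomial (Fin (n + 1)) k) (j : ℕ) :
    (slice β f).coeff j = MvPolynomial.coeff (snF β j) f := by
  classical
  rw [slice, Polynomial.finset_sum_coeff]
  rw [Finset.sum_eq_single (snF β j)]
  · simp only [coe_snF, Fin.init_snoc, if_pos rfl, Fin.snoc_last]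
    simp
  · intro b hb hne
    split_ifs with h
    · rw [Polynomial.coeff_C_mul, Polynomial.coeff_X_pow]
      rw [if_neg, mul_zero]
      intro hj
      apply hne
      rw [← snF_init_last b, h, hj]
    · simp
  · intro hb
    simp only [coe_snF, Fin.init_snoc, if_pos rfl, Fin.snoc_last]
    rw [MvPolynomial.notMem_support_iff.mp hb]
    simp

lemma slice_add (β : Fin n → ℕ) (f g : MvPolynomial (Fin (n + 1)) k) :
    slice β (f + g) = slice β f + slice β g := by
  apply Polynomial.ext; intro j
  simp [slice_coeff, MvPolynomial.coeff_add]

lemma slice_C_mul (β : Fin n → ℕ) (c : k) (f : MvPolynomial (Fin (n + 1)) k) :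
    slice β (MvPolynomial.C c * f) = Polynomial.C c * slice β f := by
  apply Polynomial.ext; intro j
  simp [slice_coeff, MvPolynomial.coeff_C_mul]

lemma sub_single_last (β : Fin n → ℕ) (j : ℕ) :
    snF β (j + 1) - Finsupp.single (Fin.last n) 1 = snF β j := by
  apply Finsupp.ext
  intro i
  rw [Finsupp.tsub_apply]
  induction i using Fin.lastCases with
  | last => simp
  | cast i =>
      show (Fin.snoc β (j+1) : Fin (n+1) → ℕ) i.castSucc - _ = (Fin.snoc β j : Fin (n+1) → ℕ) i.castSucc
      rw [Fin.snoc_castSucc, Fin.snoc_castSucc, Finsupp.single_apply,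
        if_neg (Fin.castSucc_lt_last i).ne', Nat.sub_zero]

lemma slice_X_mul (β : Fin n → ℕ) (f : MvPolynomial (Fin (n + 1)) k) :
    slice β (f * MvPolynomial.X (Fin.last n)) = slice β f * Polynomial.X := by
  classical
  apply Polynomial.ext; intro j
  rw [slice_coeff, MvPolynomial.coeff_mul_X']
  cases j with
  | zero =>
      rw [if_neg, Polynomial.mul_coeff_zero, Polynomial.coeff_X_zero, mul_zero]
      simp
  | succ j =>
      rw [Polynomial.coeff_mul_X, if_pos, sub_single_last, slice_coeff]
      simp

lemma slice_X_pow_mul (β : Fin n → ℕ) (f : MvPolynomial (Fin (n + 1)) k) (e : ℕ) :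
    slice β (f * MvPolynomial.X (Fin.last n) ^ e) = slice β f * Polynomial.X ^ e := by
  induction e with
  | zero => simp
  | succ e ih =>
      rw [pow_succ, pow_succ, ← mul_assoc, slice_X_mul, ih, mul_assoc]

/-- embedding of `k[X_n]` into `k[X_0,…,X_n]` -/
noncomputable def psi (c : Polynomial k) : MvPolynomial (Fin (n + 1)) k :=
  Polynomial.aeval (MvPolynomial.X (Fin.last n)) c

lemma psi_mul (c d : Polynomial k) : psi (c * d) = (psi c : MvPolynomial (Fin (n+1)) k) * psi d :=
  map_mul _ _ _

lemma psi_add (c d : Polynomial k) : psi (c + d) = (psi c : MvPolynomial (Fin (n+1)) k) + psi d :=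
  map_add _ _ _

lemma psi_monomial (e : ℕ) (a : k) :
    (psi (Polynomial.monomial e a) : MvPolynomial (Fin (n+1)) k)
      = MvPolynomial.C a * MvPolynomial.X (Fin.last n) ^ e := by
  rw [psi, Polynomial.aeval_monomial, MvPolynomial.algebraMap_eq]

lemma slice_psi_mul (β : Fin n → ℕ) (u : Polynomial k) (f : MvPolynomial (Fin (n + 1)) k) :
    slice β (psi u * f) = u * slice β f := by
  induction u using Polynomial.induction_on' with
  | add p q hp hq => rw [psi_add, add_mul, slice_add, hp, hq, add_mul]
  | monomial e a =>
      rw [psi_monomial, mul_assoc, mul_comm (MvPolynomial.X (Fin.last n) ^ e) f,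
        slice_C_mul, slice_X_pow_mul, ← Polynomial.C_mul_X_pow_eq_monomial]
      ring

lemma single_last_eq_iff (j : ℕ) (m : Fin (n + 1) →₀ ℕ) :
    Finsupp.single (Fin.last n) j = m ↔ (Fin.init ⇑m = 0 ∧ m (Fin.last n) = j) := by
  constructor
  · rintro rfl
    constructor
    · funext i
      show Finsupp.single (Fin.last n) j i.castSucc = 0
      rw [Finsupp.single_apply, if_neg (Fin.castSucc_lt_last i).ne']
    · simp
  · rintro ⟨h1, h2⟩
    apply Finsupp.ext
    intro i
    induction i using Fin.lastCases with
    | last => rw [h2, Finsupp.single_eq_same]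
    | cast i =>
        rw [Finsupp.single_apply, if_neg (Fin.castSucc_lt_last i).ne']
        exact (congrFun h1 i).symm

lemma coeff_psi (c : Polynomial k) (m : Fin (n + 1) →₀ ℕ) :
    MvPolynomial.coeff m (psi c) =
      if Fin.init ⇑m = 0 then c.coeff (m (Fin.last n)) else 0 := by
  classical
  induction c using Polynomial.induction_on' with
  | add p q hp hq =>
      rw [psi_add, MvPolynomial.coeff_add, hp, hq, Polynomial.coeff_add]
      split_ifs <;> simp
  | monomial e a =>
      rw [psi_monomial,
        MvPolynomial.coeff_C_mul, MvPolynomial.coeff_X_pow, Polynomial.coeff_monomial]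
      by_cases h : Finsupp.single (Fin.last n) e = m
      · obtain ⟨h1, h2⟩ := (single_last_eq_iff e m).mp h
        rw [if_pos h, if_pos h1, h2, if_pos rfl, mul_one]
      · rw [if_neg h, mul_zero]
        split_ifs with h1 h2
        · exfalso; exact h ((single_last_eq_iff e m).mpr ⟨h1, h2.symm⟩)
        · rfl
        · rfl

lemma coeff_mono_psi (α : Fin n → ℕ) (c : Polynomial k) (m : Fin (n + 1) →₀ ℕ) :
    MvPolynomial.coeff m (MvPolynomial.monomial (snF α 0) (1 : k) * psi c) =
      if Fin.init ⇑m = α then c.coeff (m (Fin.last n)) else 0 := by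
  classical
  rw [MvPolynomial.coeff_monomial_mul', coeff_psi]
  have hcoe : ∀ (h : snF α 0 ≤ m), ⇑(m - snF α 0) = ⇑m - Fin.snoc α 0 := by
    intro _; rw [Finsupp.coe_tsub, coe_snF]
  by_cases hle : snF α 0 ≤ m
  · have hinit : Fin.init ⇑(m - snF α 0) = Fin.init ⇑m - α := by
      rw [hcoe hle]
      funext i
      simp [Fin.init]
    have hlast : (m - snF α 0) (Fin.last n) = m (Fin.last n) := by
      rw [Finsupp.tsub_apply, snF_last, Nat.sub_zero]
    have hle' : α ≤ Fin.init ⇑m := by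
      intro i
      have := Finsupp.le_def.mp hle i.castSucc
      rw [coe_snF] at this
      simpa [Fin.init] using this
    rw [if_pos hle, hinit, hlast, one_mul]
    by_cases heq : Fin.init ⇑m = α
    · rw [if_pos, if_pos heq]
      funext i
      show Fin.init ⇑m i - α i = 0
      rw [heq]; simp
    · rw [if_neg, if_neg heq]
      intro h0
      apply heq
      funext i
      have := congrFun h0 i
      simp only [Pi.sub_apply, Pi.zero_apply] at this
      exact le_antisymm (Nat.sub_eq_zero_iff_le.mp this) (hle' i)
  · rw [if_neg hle, if_neg]
    intro heq
    apply hle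
    rw [Finsupp.le_def]
    intro i
    induction i using Fin.lastCases with
    | last => simp
    | cast i =>
        show (Fin.snoc α 0 : Fin (n+1) → ℕ) i.castSucc ≤ m i.castSucc
        rw [Fin.snoc_castSucc, ← heq]
        exact le_refl _

lemma slice_mono_psi (β α : Fin n → ℕ) (c : Polynomial k) :
    slice β (MvPolynomial.monomial (snF α 0) (1 : k) * psi c) =
      if β = α then c else 0 := by
  apply Polynomial.ext; intro j
  rw [slice_coeff, coeff_mono_psi, coe_snF, Fin.init_snoc, Fin.snoc_last]
  split_ifs with h
  · rfl
  · simp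

/-! Lex order lemmas -/

lemma lex_lt_of_init_lt {a b : Fin (n + 1) →₀ ℕ}
    (h : toLex (Finsupp.equivFunOnFinite.symm (Fin.init ⇑a)) <
         toLex (Finsupp.equivFunOnFinite.symm (Fin.init ⇑b))) :
    toLex a < toLex b := by
  rw [Finsupp.Lex.lt_iff] at h ⊢
  obtain ⟨i, hj, hi⟩ := h
  refine ⟨i.castSucc, ?_, hi⟩
  intro j hji
  have hjlast : j ≠ Fin.last n := by
    intro hj'
    exact absurd (hj' ▸ hji) (not_lt.mpr (Fin.castSucc_lt_last i).le)
  obtain ⟨j', rfl⟩ := Fin.exists_castSucc_eq.mpr hjlast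
  exact hj j' (Fin.castSucc_lt_castSucc_iff.mp hji)

lemma last_le_of_lex_le {a b : Fin (n + 1) →₀ ℕ}
    (hinit : Fin.init ⇑a = Fin.init ⇑b) (h : toLex a ≤ toLex b) :
    a (Fin.last n) ≤ b (Fin.last n) := by
  rcases eq_or_lt_of_le h with heq | hlt
  · rw [toLex.injective heq]
  · rw [Finsupp.Lex.lt_iff] at hlt
    obtain ⟨i, hj, hi⟩ := hlt
    induction i using Fin.lastCases with
    | last => exact hi.le
    | cast i =>
        exfalso
        have : a i.castSucc = b i.castSucc := congrFun hinit i
        exact absurd this hi.ne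
  
lemma lex_le_of_init_eq_last_le {a b : Fin (n + 1) →₀ ℕ}
    (hinit : Fin.init ⇑a = Fin.init ⇑b) (h : a (Fin.last n) ≤ b (Fin.last n)) :
    toLex a ≤ toLex b := by
  rcases eq_or_lt_of_le h with heq | hlt
  · have : a = b := by
      apply Finsupp.ext
      intro i
      induction i using Fin.lastCases with
      | last => exact heq
      | cast i => exact congrFun hinit i
    rw [this]
  · apply le_of_lt
    rw [Finsupp.Lex.lt_iff]
    refine ⟨Fin.last n, ?_, hlt⟩
    intro j hj
    obtain ⟨j', rfl⟩ := Fin.exists_castSucc_eq.mpr hj.ne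
    exact congrFun hinit j'

lemma init_le_of_lex_le {a b : Fin (n + 1) →₀ ℕ} (h : toLex a ≤ toLex b) :
    toLex (Finsupp.equivFunOnFinite.symm (Fin.init ⇑a)) ≤
      toLex (Finsupp.equivFunOnFinite.symm (Fin.init ⇑b)) := by
  by_contra hlt
  push_neg at hlt
  exact absurd (lex_lt_of_init_lt hlt) (not_lt.mpr h)

/-! lexDeg and initLead spec lemmas -/

lemma exists_lexDeg_max {g : MvPolynomial (Fin (n + 1)) k} (hg : g ≠ 0) :
    ∃ Mx : Fin (n + 1) →₀ ℕ, Mx ∈ g.support ∧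
      (∀ m ∈ g.support, toLex m ≤ toLex Mx) ∧ lexDeg g = ⇑Mx := by
  classical
  have hne : (g.support.image (fun m => toLex m)).Nonempty :=
    (MvPolynomial.support_nonempty.mpr hg).image _
  obtain ⟨y, hy⟩ := Finset.max_of_nonempty hne
  obtain ⟨Mx, hMx, hMxy⟩ := Finset.mem_image.mp (Finset.mem_of_max hy)
  refine ⟨Mx, hMx, ?_, ?_⟩
  · intro m hm
    have := Finset.le_max (Finset.mem_image_of_mem (fun m => toLex m) hm)
    rw [hy] at this
    rw [hMxy]
    exact_mod_cast this
  · rw [lexDeg, hy, WithBot.unbotD_coe, ← hMxy]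
    rfl

lemma initLead_eq {g : MvPolynomial (Fin (n + 1)) k} (hg : g ≠ 0)
    {Mx : Fin (n + 1) →₀ ℕ} (hMx : Mx ∈ g.support)
    (hmax : ∀ m ∈ g.support, toLex m ≤ toLex Mx) :
    initLead g = Fin.init ⇑Mx := by
  classical
  set φ : (Fin (n + 1) →₀ ℕ) → Lex (Fin n →₀ ℕ) :=
    fun m => toLex (Finsupp.equivFunOnFinite.symm (Fin.init ⇑m)) with hφ
  have hmem : φ Mx ∈ g.support.image φ := Finset.mem_image_of_mem φ hMx
  have hmax' : (g.support.image φ).max = (φ Mx : WithBot (Lex (Fin n →₀ ℕ))) := by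
    apply le_antisymm
    · apply Finset.max_le
      intro b hb
      obtain ⟨m, hm, rfl⟩ := Finset.mem_image.mp hb
      exact_mod_cast init_le_of_lex_le (hmax m hm)
    · exact Finset.le_max hmem
  rw [initLead, hmax', WithBot.unbotD_coe]
  rfl

end LCnAux

open LCnAux in
theorem LCn_dvd_p0 {n : ℕ} {k : Type*} [Field k] [CharZero k]
    {t : ℕ} (p : Fin t → (Fin (n + 1) → k)) (hp : Function.Injective p)
    (D : Fin t → Set (Fin (n + 1) → ℕ))
    (hfin : ∀ i, (D i).Finite) (hlow : ∀ i, IsLowerSetN (D i)) (hne : ∀ i, (D i).Nonempty)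
    (I : Ideal (MvPolynomial (Fin (n + 1)) k))
    (hI : (I : Set (MvPolynomial (Fin (n + 1)) k)) =
      {f | ∀ i : Fin t, ∀ d ∈ D i, MvPolynomial.eval (p i) (mderiv d f) = 0})
    (G : Set (MvPolynomial (Fin (n + 1)) k)) (hG : IsRedGB I G)
    (p₀ : MvPolynomial (Fin (n + 1)) k) (hp₀G : p₀ ∈ G)
    (hp₀uni : ∀ m ∈ p₀.support, Fin.init ⇑m = (0 : Fin n → ℕ)) :
    ∀ g ∈ G, LCn g ∣ LCn p₀ := by
  classical
  obtain ⟨hGsub, hG0, hG1, hG4, hG5⟩ := hG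
  intro g hgG
  have hg0 : g ≠ 0 := hG0 g hgG
  have hp00 : p₀ ≠ 0 := hG0 p₀ hp₀G
  obtain ⟨Mg, hMgmem, hMgmax, hMgcoe⟩ := exists_lexDeg_max hg0
  obtain ⟨Mp, hMpmem, hMpmax, hMpcoe⟩ := exists_lexDeg_max hp00
  set α : Fin n → ℕ := Fin.init ⇑Mg with hα
  set L : ℕ := Mg (Fin.last n) with hL
  have hinitg : initLead g = α := initLead_eq hg0 hMgmem hMgmax
  have hinitp : initLead p₀ = 0 := by
    rw [initLead_eq hp00 hMpmem hMpmax, hp₀uni Mp hMpmem]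
  set h : Polynomial k := slice α g with hh
  set P : Polynomial k := slice 0 p₀ with hP
  have hLCng : LCn g = h := by rw [LCn_eq_slice, hinitg]
  have hLCnp : LCn p₀ = P := by rw [LCn_eq_slice, hinitp]
  -- coefficient of g at its leading monomial is 1
  have hcoeffMg : MvPolynomial.coeff Mg g = 1 := by
    have := hG1 g hgG
    rwa [hMgcoe, Finsupp.equivFunOnFinite_symm_coe] at this
  -- h has coeff 1 at L and nothing above
  have hsnFMg : snF α L = Mg := snF_init_last Mg
  have hhL : h.coeff L = 1 := by rw [hh, slice_coeff, hsnFMg, hcoeffMg]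
  have hh0 : h ≠ 0 := fun hc => by simp [hc] at hhL
  have hhj : ∀ j, L < j → h.coeff j = 0 := by
    intro j hj
    by_contra hc
    have hmem : snF α j ∈ g.support := by
      rw [MvPolynomial.mem_support_iff]
      rw [hh, slice_coeff] at hc
      exact hc
    have hle := hMgmax _ hmem
    have : (snF α j) (Fin.last n) ≤ Mg (Fin.last n) := by
      apply last_le_of_lex_le _ hle
      rw [coe_snF, Fin.init_snoc, hα]
    rw [snF_last] at this
    exact absurd this (not_le.mpr hj)
  have hdegh : h.natDegree = L :=
    le_antisymm (Polynomial.natDegree_le_iff_coeff_eq_zero.mpr hhj)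
      (Polynomial.le_natDegree_of_ne_zero (hhL ▸ one_ne_zero))
  -- p₀ = psi P
  have hp₀psi : p₀ = psi P := by
    apply MvPolynomial.ext
    intro m
    rw [coeff_psi]
    by_cases hm : Fin.init ⇑m = 0
    · have hmsn : snF 0 (m (Fin.last n)) = m := by
        rw [← hm]; exact snF_init_last m
      rw [if_pos hm, hP, slice_coeff, hmsn]
    · rw [if_neg hm]
      by_contra hc
      exact hm (hp₀uni m (MvPolynomial.mem_support_iff.mpr hc))
  -- Bezout data
  set w : Polynomial k := EuclideanDomain.gcdA h P with hw
  set v : Polynomial k := EuclideanDomain.gcdB h P with hv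
  set d : Polynomial k := EuclideanDomain.gcd h P with hd
  have hbezout : d = h * w + P * v := EuclideanDomain.gcd_eq_gcd_ab h P
  have hd0 : d ≠ 0 := fun hc => hh0 ((EuclideanDomain.gcd_eq_zero_iff.mp hc).1)
  have hdvdh : d ∣ h := EuclideanDomain.gcd_dvd_left h P
  have hdvdP : d ∣ P := EuclideanDomain.gcd_dvd_right h P
  set dd : ℕ := d.natDegree with hdd
  -- the auxiliary polynomial f
  set f : MvPolynomial (Fin (n + 1)) k :=
    psi w * g + MvPolynomial.monomial (snF α 0) (1 : k) * psi v * p₀ with hf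
  have hfI : f ∈ I := by
    apply I.add_mem
    · exact I.mul_mem_left _ (hGsub hgG)
    · exact I.mul_mem_left _ (hGsub hp₀G)
  -- slices of f
  have hslicef : ∀ β, slice β f = w * slice β g + (if β = α then v * P else 0) := by
    intro β
    rw [hf, slice_add, slice_psi_mul]
    congr 1
    rw [hp₀psi, mul_assoc, ← psi_mul, slice_mono_psi]
  have hsliceα : slice α f = d := by
    rw [hslicef, if_pos rfl, ← hh, hbezout]
    ring
  -- coefficient of f at snF α dd is nonzero
  have hcoefff : MvPolynomial.coeff (snF α dd) f = d.coeff dd := by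
    rw [← slice_coeff, hsliceα]
  have hcoefff0 : MvPolynomial.coeff (snF α dd) f ≠ 0 := by
    rw [hcoefff]
    exact Polynomial.leadingCoeff_ne_zero.mpr hd0
  have hf0 : f ≠ 0 := fun hc => hcoefff0 (by rw [hc]; simp)
  -- every monomial of f is lex-below snF α dd
  have hfbound : ∀ m ∈ f.support, toLex m ≤ toLex (snF α dd) := by
    intro m hm
    have hcm : MvPolynomial.coeff m f ≠ 0 := MvPolynomial.mem_support_iff.mp hm
    have hcm' : (slice (Fin.init ⇑m) f).coeff (m (Fin.last n)) ≠ 0 := by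
      rw [slice_coeff, snF_init_last]; exact hcm
    by_cases hβ : Fin.init ⇑m = α
    · -- init equal: compare last coordinates
      rw [hβ, hsliceα] at hcm'
      have : m (Fin.last n) ≤ dd := Polynomial.le_natDegree_of_ne_zero hcm'
      apply lex_le_of_init_eq_last_le
      · rw [coe_snF, Fin.init_snoc, hβ]
      · rw [snF_last]; exact this
    · -- init strictly smaller
      rw [hslicef, if_neg hβ, add_zero] at hcm'
      have hsg : slice (Fin.init ⇑m) g ≠ 0 := by
        intro hc
        rw [hc, mul_zero] at hcm'
        simp at hcm'
      obtain ⟨j, hj⟩ : ∃ j, (slice (Fin.init ⇑m) g).coeff j ≠ 0 := by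
        by_contra hc
        push_neg at hc
        exact hsg (Polynomial.ext hc)
      have hmem : snF (Fin.init ⇑m) j ∈ g.support := by
        rw [MvPolynomial.mem_support_iff]
        rw [slice_coeff] at hj
        exact hj
      have hle := init_le_of_lex_le (hMgmax _ hmem)
      have heqi : Fin.init ⇑(snF (Fin.init ⇑m) j) = Fin.init ⇑m := by
        rw [coe_snF, Fin.init_snoc]
      rw [heqi] at hle
      have hlt : toLex (Finsupp.equivFunOnFinite.symm (Fin.init ⇑m)) <
          toLex (Finsupp.equivFunOnFinite.symm α) := by
        rcases lt_or_eq_of_le hle with hlt | heq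
        · exact hlt
        · exfalso
          apply hβ
          have := toLex.injective heq
          have := Finsupp.equivFunOnFinite.symm.injective this
          exact this
      apply le_of_lt
      apply lex_lt_of_init_lt
      rw [coe_snF, Fin.init_snoc]
      exact hlt
  -- lexDeg f = snoc α dd
  have hlexf : lexDeg f = Fin.snoc α dd := by
    classical
    have hmem : snF α dd ∈ f.support := MvPolynomial.mem_support_iff.mpr hcoefff0
    have hmax' : (f.support.image (fun m => toLex m)).max
        = (((toLex (snF α dd) : Lex (Fin (n+1) →₀ ℕ))) : WithBot (Lex (Fin (n+1) →₀ ℕ))) := by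
      apply le_antisymm
      · apply Finset.max_le
        intro b hb
        obtain ⟨m, hm, rfl⟩ := Finset.mem_image.mp hb
        exact_mod_cast hfbound m hm
      · exact Finset.le_max (Finset.mem_image_of_mem _ hmem)
    rw [lexDeg, hmax', WithBot.unbotD_coe]
    rfl
  -- apply GB conditions
  obtain ⟨g', hg'G, hle'⟩ := hG4 f hfI hf0
  have hchain : (Fin.snoc α dd : Fin (n+1) → ℕ) ≤ ⇑Mg := by
    intro i
    induction i using Fin.lastCases with
    | last =>
        rw [Fin.snoc_last]
        -- we don't know dd ≤ L here... we know dd ≤ L via d ∣ h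
        have : dd ≤ h.natDegree := Polynomial.natDegree_le_of_dvd hdvdh hh0
        rw [hdegh] at this
        exact this
    | cast i =>
        rw [Fin.snoc_castSucc]
        exact le_refl _
  have hg'g : g' = g := by
    by_contra hne'
    apply hG5 g hgG Mg hMgmem g' hg'G hne'
    calc lexDeg g' ≤ lexDeg f := hle'
    _ = Fin.snoc α dd := hlexf
    _ ≤ ⇑Mg := hchain
  -- conclude L ≤ dd
  subst hg'g
  have hLdd : L ≤ dd := by
    have := hle' (Fin.last n)
    rw [hlexf, hMgcoe, Fin.snoc_last] at this
    exact this
  have hddL : dd = L := le_antisymm (by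
    have : dd ≤ h.natDegree := Polynomial.natDegree_le_of_dvd hdvdh hh0
    rwa [hdegh] at this) hLdd
  -- h divides d up to unit, hence h ∣ P
  obtain ⟨c, hc⟩ := hdvdh
  have hc0 : c ≠ 0 := by
    intro hcz
    rw [hcz, mul_zero] at hc
    exact hh0 hc
  have hdegc : c.natDegree = 0 := by
    have := Polynomial.natDegree_mul hd0 hc0
    rw [← hc, hdegh, ← hdd, hddL] at this
    omega
  have hcC : c = Polynomial.C (c.coeff 0) := Polynomial.eq_C_of_natDegree_eq_zero hdegc
  obtain ⟨a, ha⟩ : ∃ a : k, c = Polynomial.C a := ⟨c.coeff 0, hcC⟩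
  have ha0 : a ≠ 0 := fun hz => hc0 (by rw [ha, hz, map_zero])
  have hhd : h ∣ d := by
    refine ⟨Polynomial.C a⁻¹, ?_⟩
    rw [hc, ha, mul_assoc, ← map_mul, mul_inv_cancel₀ ha0, map_one, mul_one]
  rw [hLCng, hLCnp]
  exact dvd_trans hhd hdvdP
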